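/- arXiv:2505.21088 — 3 statements merged into one kernel-verified Lean document; each statement's English description precedes it below -/
import Mathlib

section
/- Suppose each v_i : ℝ → ℝ is differentiable with v_i'(t) = h_i(t) + k(v̄(t) - v_i(t)), where v̄ is the mean of the v_i. Then the variance V(t) = (1/N)Σ_i (v_i(t) - v̄(t))² is differentiable and satisfies V'(t) = -2k V(t) + (2/N) Σ_i (v_i(t) - v̄(t))(h_i(t) - h̄(t)), where h̄ is the mean of the h_i. -/
theorem stmt_3 (N : ℕ) (hN : 1 ≤ N) (k : ℝ)
    (v : Fin N → ℝ → ℝ) (h : Fin N → ℝ → ℝ)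
    (hv : ∀ i, Differentiable ℝ (v i)) (hh : ∀ i, Continuous (h i))
    (vbar : ℝ → ℝ) (hvbar : ∀ t, vbar t = (1 / (N : ℝ)) * ∑ i, v i t)
    (hbar : ℝ → ℝ) (hhbar : ∀ t, hbar t = (1 / (N : ℝ)) * ∑ i, h i t)
    (V : ℝ → ℝ) (hV : ∀ t, V t = (1 / (N : ℝ)) * ∑ i, (v i t - vbar t) ^ 2)
    (hode : ∀ i, ∀ t : ℝ, deriv (v i) t = h i t + k * (vbar t - v i t)) :
    Differentiable ℝ V ∧
      ∀ t : ℝ, deriv V t =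
        -2 * k * V t + (2 / (N : ℝ)) * ∑ i, (v i t - vbar t) * (h i t - hbar t) := by
  have hN0 : (N : ℝ) ≠ 0 := by positivity
  -- vbar has derivative hbar t at every t
  have hvbar' : ∀ t : ℝ, HasDerivAt vbar (hbar t) t := by
    intro t
    have h1 : HasDerivAt (fun s => (1 / (N : ℝ)) * ∑ i, v i s)
        ((1 / (N : ℝ)) * ∑ i, deriv (v i) t) t := by
      exact (HasDerivAt.fun_sum (fun i _ => ((hv i) t).hasDerivAt)).const_mul _
    have heq : (1 / (N : ℝ)) * ∑ i, deriv (v i) t = hbar t := by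
      have : ∑ i, deriv (v i) t = ∑ i, (h i t + k * (vbar t - v i t)) := by
        exact Finset.sum_congr rfl (fun i _ => hode i t)
      rw [this, Finset.sum_add_distrib, ← Finset.mul_sum, Finset.sum_sub_distrib,
        Finset.sum_const, Finset.card_univ, Fintype.card_fin, hhbar, hvbar]
      field_simp
      rw [nsmul_eq_mul, mul_div_cancel₀ _ hN0]
      ring
    rw [← heq]
    exact h1.congr_of_eventuallyEq (by filter_upwards with s using (hvbar s))
  have hV' : ∀ t : ℝ, HasDerivAt V
      ((1 / (N : ℝ)) * ∑ i, (2 * (v i t - vbar t) * (deriv (v i) t - hbar t))) t := by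
    intro t
    have h1 : HasDerivAt (fun s => (1 / (N : ℝ)) * ∑ i, (v i s - vbar s) ^ 2)
        ((1 / (N : ℝ)) * ∑ i, (2 * (v i t - vbar t) * (deriv (v i) t - hbar t))) t := by
      refine HasDerivAt.const_mul _ (HasDerivAt.fun_sum (fun i _ => ?_))
      have := (((hv i) t).hasDerivAt.fun_sub (hvbar' t)).fun_pow 2
      simpa [mul_comm, mul_assoc, mul_left_comm] using this
    exact h1.congr_of_eventuallyEq (by filter_upwards with s using (hV s))
  constructor
  · exact fun t => (hV' t).differentiableAt
  · intro t
    rw [(hV' t).deriv, hV t]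
    rw [Finset.mul_sum, Finset.mul_sum, Finset.mul_sum, Finset.mul_sum, ← Finset.sum_add_distrib]
    refine Finset.sum_congr rfl (fun i _ => ?_)
    rw [hode i t]
    field_simp
    ring
end

section
/- Suppose each v_i satisfies v_i'(t) = h_i(t) + k(v̄(t) - v_i(t)) on [0,T], with |h_i(t)| ≤ M for all i and t. Then the variance V(t) = (1/N)Σ_i (v_i(t) - v̄(t))² satisfies the differential inequality V'(t) ≤ -2k V(t) + 4M √(V(t)) for all t ∈ [0,T]. -/
theorem stmt_7 (N : ℕ) (hN : 1 ≤ N) (k M T : ℝ) (hM : 0 ≤ M) (hT : 0 < T)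
    (v : Fin N → ℝ → ℝ) (h : Fin N → ℝ → ℝ)
    (hv : ∀ i, Differentiable ℝ (v i)) (hh : ∀ i, Continuous (h i))
    (vbar : ℝ → ℝ) (hvbar : ∀ t, vbar t = (1 / (N : ℝ)) * ∑ i, v i t)
    (V : ℝ → ℝ) (hV : ∀ t, V t = (1 / (N : ℝ)) * ∑ i, (v i t - vbar t) ^ 2)
    (hode : ∀ i, ∀ t ∈ Set.Icc (0 : ℝ) T, deriv (v i) t = h i t + k * (vbar t - v i t))
    (hb : ∀ i, ∀ t ∈ Set.Icc (0 : ℝ) T, |h i t| ≤ M) :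
    ∀ t ∈ Set.Icc (0 : ℝ) T,
      deriv V t ≤ -2 * k * V t + 4 * M * Real.sqrt (V t) := by
  intro t ht
  have hn0 : (0:ℝ) < (N:ℝ) := by exact_mod_cast Nat.lt_of_lt_of_le Nat.zero_lt_one hN
  have hn0' : (N:ℝ) ≠ 0 := ne_of_gt hn0
  set n : ℝ := (N:ℝ) with hn
  -- derivatives
  have hvD : ∀ i, HasDerivAt (v i) (deriv (v i) t) t := fun i => ((hv i) t).hasDerivAt
  have hvbarD : HasDerivAt vbar ((1/n) * ∑ j, deriv (v j) t) t := by
    have he : vbar = fun s => (1/n) * ∑ j, v j s := funext hvbar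
    rw [he]
    exact (HasDerivAt.fun_sum fun j _ => hvD j).const_mul _
  have hVD : HasDerivAt V ((1/n) * ∑ i,
      (2 * (v i t - vbar t) * (deriv (v i) t - (1/n) * ∑ j, deriv (v j) t))) t := by
    have he : V = fun s => (1/n) * ∑ i, (v i s - vbar s)^2 := funext hV
    rw [he]
    refine HasDerivAt.const_mul _ (HasDerivAt.fun_sum fun i _ => ?_)
    have := ((hvD i).fun_sub hvbarD).fun_pow 2
    simpa using this
  -- sum of derivatives equals sum of h's
  have hsumv : ∑ j, v j t = n * vbar t := by
    rw [hvbar t]; field_simp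
  have hsumd : ∑ j, deriv (v j) t = ∑ j, h j t := by
    rw [Finset.sum_congr rfl (fun j _ => hode j t ht)]
    rw [Finset.sum_add_distrib, ← Finset.mul_sum, Finset.sum_sub_distrib, hsumv]
    simp [Finset.sum_const, mul_comm, hn]
  set hbar : ℝ := (1/n) * ∑ j, h j t with hhbar
  have hdV : deriv V t = (1/n) * ∑ i,
      (2 * (v i t - vbar t) * ((h i t - hbar) - k * (v i t - vbar t))) := by
    rw [hVD.deriv]
    congr 1
    refine Finset.sum_congr rfl (fun i _ => ?_)
    rw [hode i t ht, hsumd]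
    rw [hhbar]; ring_nf
  -- split
  have hsplit : deriv V t = -2 * k * V t + (2/n) * ∑ i, (v i t - vbar t) * (h i t - hbar) := by
    rw [hdV, hV t]
    calc (1/n) * ∑ i, (2 * (v i t - vbar t) * ((h i t - hbar) - k * (v i t - vbar t)))
        = ∑ i, (-2 * k * (1/n * (v i t - vbar t)^2) + (2/n) * ((v i t - vbar t) * (h i t - hbar))) := by
          rw [Finset.mul_sum]
          exact Finset.sum_congr rfl (fun i _ => by field_simp; ring)
      _ = -2 * k * (1/n * ∑ i, (v i t - vbar t)^2) + (2/n) * ∑ i, (v i t - vbar t) * (h i t - hbar) := by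
          rw [Finset.sum_add_distrib, ← Finset.mul_sum, ← Finset.mul_sum, ← Finset.mul_sum]
  rw [hsplit]
  have hbM : |hbar| ≤ M := by
    rw [hhbar, abs_mul, abs_of_pos (by positivity : (0:ℝ) < 1/n)]
    calc 1/n * |∑ j, h j t| ≤ 1/n * ∑ j, |h j t| := by
          gcongr; exact Finset.abs_sum_le_sum_abs _ _
      _ ≤ 1/n * ∑ _j : Fin N, M :=
          mul_le_mul_of_nonneg_left (Finset.sum_le_sum fun j _ => hb j t ht) (by positivity)
      _ = M := by
          simp only [Finset.sum_const, Finset.card_univ, Fintype.card_fin, nsmul_eq_mul]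
          field_simp
          rfl
  have hterm : ∀ i, (v i t - vbar t) * (h i t - hbar) ≤ |v i t - vbar t| * (2*M) := by
    intro i
    calc (v i t - vbar t) * (h i t - hbar) ≤ |(v i t - vbar t) * (h i t - hbar)| := le_abs_self _
      _ = |v i t - vbar t| * |h i t - hbar| := abs_mul _ _
      _ ≤ |v i t - vbar t| * (2*M) := by
          gcongr
          calc |h i t - hbar| ≤ |h i t| + |hbar| := abs_sub _ _
            _ ≤ M + M := add_le_add (hb i t ht) hbM
            _ = 2*M := by ring
  -- Cauchy-Schwarz : (1/n) Σ |x_i| ≤ sqrt (V t)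
  have hV0 : 0 ≤ V t := by
    rw [hV t]; positivity
  have hcs : (1/n) * ∑ i, |v i t - vbar t| ≤ Real.sqrt (V t) := by
    rw [show Real.sqrt (V t) = Real.sqrt (V t) from rfl]
    rw [← Real.sqrt_sq (by positivity : (0:ℝ) ≤ (1/n) * ∑ i, |v i t - vbar t|)]
    apply Real.sqrt_le_sqrt
    rw [hV t]
    have hcard : ((Finset.univ : Finset (Fin N)).card : ℝ) = n := by simp [hn]
    have := sq_sum_le_card_mul_sum_sq (s := (Finset.univ : Finset (Fin N)))
      (f := fun i => |v i t - vbar t|)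
    rw [hcard] at this
    calc ((1/n) * ∑ i, |v i t - vbar t|)^2 = (1/n^2) * (∑ i, |v i t - vbar t|)^2 := by ring
      _ ≤ (1/n^2) * (n * ∑ i, |v i t - vbar t|^2) :=
          mul_le_mul_of_nonneg_left this (by positivity)
      _ = (1/n) * ∑ i, |v i t - vbar t|^2 := by field_simp
      _ = (1/n) * ∑ i, (v i t - vbar t)^2 := by simp [sq_abs]
  have hbound : (2/n) * ∑ i, (v i t - vbar t) * (h i t - hbar) ≤ 4 * M * Real.sqrt (V t) := by
    calc (2/n) * ∑ i, (v i t - vbar t) * (h i t - hbar)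
        ≤ (2/n) * ∑ i, |v i t - vbar t| * (2*M) :=
          mul_le_mul_of_nonneg_left (Finset.sum_le_sum fun i _ => hterm i) (by positivity)
      _ = 4 * M * ((1/n) * ∑ i, |v i t - vbar t|) := by
          rw [← Finset.sum_mul]; ring
      _ ≤ 4 * M * Real.sqrt (V t) := by gcongr
  linarith
end

section
/- (Main synchronization theorem, ODE form) Suppose v_i : ℝ → ℝ, i = 1,...,N, are differentiable and satisfy v_i'(t) = h_i(t) + k(v̄(t) - v_i(t)) on [0,T], with |h_i(t)| ≤ M, and the variance V(t) = (1/N)Σ_i(v_i(t) - v̄(t))² satisfies √(V(0)) ≤ W_0 with V(t) > 0 on [0,T]. Let ε > 0 and τ ∈ (0,T]. If k ≥ 4M/√ε and k > (1/τ) ln(2W_0/√ε), and W_0 ≥ 2M/k, and W(t) = √(V(t)) is C¹ on [0,T], then V(τ) < ε. -/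
open Real Set Finset

theorem stmt_13 (N : ℕ) (hN : 1 ≤ N) (T τ k M ε W₀ : ℝ)
    (hT : 0 < T) (hτ : τ ∈ Set.Ioc (0 : ℝ) T) (hk : 0 < k) (hM : 0 ≤ M)
    (hε : 0 < ε) (hW₀ : 0 < W₀)
    (v : Fin N → ℝ → ℝ) (h : Fin N → ℝ → ℝ)
    (hv : ∀ i, Differentiable ℝ (v i)) (hh : ∀ i, Continuous (h i))
    (vbar : ℝ → ℝ) (hvbar : ∀ t, vbar t = (1 / (N : ℝ)) * ∑ j, v j t)
    (hode : ∀ i, ∀ t ∈ Set.Icc (0 : ℝ) T, deriv (v i) t = h i t + k * (vbar t - v i t))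
    (hb : ∀ i, ∀ t ∈ Set.Icc (0 : ℝ) T, |h i t| ≤ M)
    (V : ℝ → ℝ) (hV : ∀ t, V t = (1 / (N : ℝ)) * ∑ i, (v i t - vbar t) ^ 2)
    (hVpos : ∀ t ∈ Set.Icc (0 : ℝ) T, 0 < V t)
    (W : ℝ → ℝ) (hW : ∀ t, W t = Real.sqrt (V t)) (hWC1 : ContDiff ℝ 1 W)
    (hV0 : Real.sqrt (V 0) ≤ W₀) (hW₀big : W₀ ≥ 2 * M / k)
    (hk1 : k ≥ 4 * M / Real.sqrt ε)
    (hk2 : k > (1 / τ) * Real.log (2 * W₀ / Real.sqrt ε)) :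
    V τ < ε := by
  obtain ⟨hτ0, hτT⟩ := hτ
  have hN0 : (0 : ℝ) < (N : ℝ) := by exact_mod_cast hN
  have hsε : 0 < Real.sqrt ε := Real.sqrt_pos.mpr hε
  have hVf : V = fun t => (1 / (N : ℝ)) * ∑ i, (v i t - vbar t) ^ 2 := funext hV
  have hvbarf : vbar = fun t => (1 / (N : ℝ)) * ∑ j, v j t := funext hvbar
  have hWf : W = fun t => Real.sqrt (V t) := funext hW
  have hvbarD : Differentiable ℝ vbar := by
    rw [hvbarf]
    exact Differentiable.const_mul (Differentiable.fun_sum fun i _ => hv i) _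
  -- derivative of V
  have hVd : ∀ t, HasDerivAt V
      ((1 / (N : ℝ)) * ∑ i, 2 * (v i t - vbar t) * (deriv (v i) t - deriv vbar t)) t := by
    intro t
    rw [hVf]
    have hsum : HasDerivAt (fun t => ∑ i, (v i t - vbar t) ^ 2)
        (∑ i, 2 * (v i t - vbar t) * (deriv (v i) t - deriv vbar t)) t := by
      refine HasDerivAt.fun_sum fun i _ => ?_
      have hd : HasDerivAt (fun t => v i t - vbar t)
          (deriv (v i) t - deriv vbar t) t :=
        ((hv i t).hasDerivAt).sub ((hvbarD t).hasDerivAt)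
      have := hd.fun_pow 2
      simpa [pow_one, mul_comm, mul_assoc, mul_left_comm] using this
    simpa using hsum.const_mul (1 / (N : ℝ))
  -- key bound on deriv V
  have hkey : ∀ t ∈ Set.Icc (0 : ℝ) T,
      deriv V t ≤ 2 * M * Real.sqrt (V t) - 2 * k * V t := by
    intro t ht
    have hdV := (hVd t).deriv
    rw [hdV]
    have hsum0 : ∑ i, (v i t - vbar t) = 0 := by
      rw [Finset.sum_sub_distrib, Finset.sum_const, Finset.card_univ, Fintype.card_fin,
        hvbar t]
      field_simp
      rw [nsmul_eq_mul]; field_simp; ring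
    have h1 : ∀ i ∈ Finset.univ, 2 * (v i t - vbar t) * (deriv (v i) t - deriv vbar t)
        = (2 * ((v i t - vbar t) * h i t) - 2 * k * (v i t - vbar t) ^ 2)
          + (-2 * deriv vbar t) * (v i t - vbar t) := by
      intro i _
      rw [hode i t ht]; ring
    rw [Finset.sum_congr rfl h1, Finset.sum_add_distrib, Finset.sum_sub_distrib,
      ← Finset.mul_sum, ← Finset.mul_sum, ← Finset.mul_sum, hsum0, mul_zero, add_zero]
    -- now goal: (1/N) * (2 * Σ c h - 2k Σ c²) ≤ 2M √V - 2kV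
    have hcs : (1 / (N : ℝ)) * ∑ i, |v i t - vbar t| ≤ Real.sqrt (V t) := by
      have hS : (0 : ℝ) ≤ ∑ i, |v i t - vbar t| :=
        Finset.sum_nonneg fun i _ => abs_nonneg _
      rw [show Real.sqrt (V t) = Real.sqrt (V t) from rfl]
      rw [← Real.sqrt_sq (by positivity : (0:ℝ) ≤ (1 / (N : ℝ)) * ∑ i, |v i t - vbar t|)]
      apply Real.sqrt_le_sqrt
      have := sq_sum_le_card_mul_sum_sq (s := Finset.univ)
        (f := fun i => |v i t - vbar t|)
      simp only [Finset.card_univ, Fintype.card_fin, sq_abs] at this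
      rw [hV t, mul_pow]
      calc (1 / (N : ℝ)) ^ 2 * (∑ i, |v i t - vbar t|) ^ 2
          ≤ (1 / (N : ℝ)) ^ 2 * ((N : ℝ) * ∑ i, (v i t - vbar t) ^ 2) := by
            apply mul_le_mul_of_nonneg_left _ (by positivity)
            exact_mod_cast this
        _ = (1 / (N : ℝ)) * ∑ i, (v i t - vbar t) ^ 2 := by
            field_simp
    have hch : ∑ i, (v i t - vbar t) * h i t ≤ M * ∑ i, |v i t - vbar t| := by
      rw [Finset.mul_sum]
      refine Finset.sum_le_sum fun i _ => ?_
      calc (v i t - vbar t) * h i t ≤ |(v i t - vbar t) * h i t| := le_abs_self _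
        _ = |v i t - vbar t| * |h i t| := abs_mul _ _
        _ ≤ |v i t - vbar t| * M := mul_le_mul_of_nonneg_left (hb i t ht) (abs_nonneg _)
        _ = M * |v i t - vbar t| := mul_comm _ _
    have hVt : V t = (1 / (N : ℝ)) * ∑ i, (v i t - vbar t) ^ 2 := hV t
    have e2 : (1 / (N : ℝ)) * (2 * ∑ i, (v i t - vbar t) * h i t
          - 2 * k * ∑ i, (v i t - vbar t) ^ 2)
        = 2 * ((1 / (N : ℝ)) * ∑ i, (v i t - vbar t) * h i t) - 2 * k * V t := by
      rw [hVt]; ring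
    rw [e2]
    have : (1 / (N : ℝ)) * ∑ i, (v i t - vbar t) * h i t ≤ M * Real.sqrt (V t) := by
      calc (1 / (N : ℝ)) * ∑ i, (v i t - vbar t) * h i t
          ≤ (1 / (N : ℝ)) * (M * ∑ i, |v i t - vbar t|) := by
            apply mul_le_mul_of_nonneg_left hch (by positivity)
        _ = M * ((1 / (N : ℝ)) * ∑ i, |v i t - vbar t|) := by ring
        _ ≤ M * Real.sqrt (V t) := mul_le_mul_of_nonneg_left hcs hM
    nlinarith [this]
  -- derivative of W on [0, T]
  have hWd : ∀ t ∈ Set.Icc (0 : ℝ) T,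
      HasDerivAt W (deriv V t / (2 * Real.sqrt (V t))) t := by
    intro t ht
    have hVt : V t ≠ 0 := ne_of_gt (hVpos t ht)
    have hVd' : HasDerivAt V (deriv V t) t := (hVd t).differentiableAt.hasDerivAt
    have := (Real.hasDerivAt_sqrt hVt).comp t hVd'
    rw [hWf]
    convert this using 1
    · rfl
    · rfl
    · rfl
    · ring
  -- bound on deriv W
  have hWbound : ∀ t ∈ Set.Icc (0 : ℝ) T, deriv W t ≤ (-k) * W t + M := by
    intro t ht
    have hs : 0 < Real.sqrt (V t) := Real.sqrt_pos.mpr (hVpos t ht)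
    rw [(hWd t ht).deriv]
    have hVsq : V t = Real.sqrt (V t) ^ 2 := (Real.sq_sqrt (hVpos t ht).le).symm
    have h1 : deriv V t ≤ 2 * M * Real.sqrt (V t) - 2 * k * V t := hkey t ht
    rw [div_le_iff₀ (by positivity)]
    rw [hW t]
    nlinarith [h1, hVsq]
  -- Gronwall on [0, τ]
  have hIcc : Set.Icc (0 : ℝ) τ ⊆ Set.Icc (0 : ℝ) T := Set.Icc_subset_Icc le_rfl hτT
  have hgron : ∀ x ∈ Set.Icc (0 : ℝ) τ, W x ≤ gronwallBound W₀ (-k) M (x - 0) := by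
    apply le_gronwallBound_of_liminf_deriv_right_le (f' := deriv W)
    · exact hWC1.continuous.continuousOn
    · intro x hx r hr
      have hmem : x ∈ Set.Icc (0 : ℝ) T := hIcc (Set.mem_Icc.mpr ⟨hx.1, hx.2.le⟩)
      have hd := hWd x hmem
      exact hd.hasDerivWithinAt.liminf_right_slope_le (hd.deriv ▸ hr)
    · rw [hW 0]; exact hV0
    · intro x hx
      exact hWbound x (hIcc (Set.mem_Icc.mpr ⟨hx.1, hx.2.le⟩))
  have hWτ : W τ ≤ W₀ * Real.exp (-k * τ) + M / k := by
    have := hgron τ (Set.mem_Icc.mpr ⟨hτ0.le, le_rfl⟩)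
    rw [sub_zero, gronwallBound_of_K_ne_0 (neg_ne_zero.mpr hk.ne')] at this
    have he1 : Real.exp (-k * τ) ≤ 1 := Real.exp_le_one_iff.mpr (by nlinarith)
    have he0 : 0 < Real.exp (-k * τ) := Real.exp_pos _
    have hMk : 0 ≤ M / k := div_nonneg hM hk.le
    have h3 : M / -k * (Real.exp (-k * τ) - 1) ≤ M / k := by
      rw [div_neg, neg_mul]
      nlinarith
    linarith [this, h3]
  -- numeric estimates
  have h1 : M / k ≤ Real.sqrt ε / 4 := by
    have h4M : 4 * M ≤ k * Real.sqrt ε := (div_le_iff₀ hsε).mp hk1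
    rw [div_le_div_iff₀ hk (by norm_num : (0:ℝ) < 4)]
    nlinarith
  have h2 : W₀ * Real.exp (-k * τ) < Real.sqrt ε / 2 := by
    have hX : 0 < 2 * W₀ / Real.sqrt ε := by positivity
    have hlog : Real.log (2 * W₀ / Real.sqrt ε) < k * τ := by
      have := mul_lt_mul_of_pos_right hk2 hτ0
      rw [mul_comm (1 / τ) _, mul_assoc, one_div] at this
      rw [inv_mul_cancel₀ hτ0.ne', mul_one] at this
      linarith [this]
    have hexp : Real.exp (-(k * τ)) < Real.sqrt ε / (2 * W₀) := by
      have h' : Real.exp (-(Real.log (2 * W₀ / Real.sqrt ε))) = Real.sqrt ε / (2 * W₀) := by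
        rw [Real.exp_neg, Real.exp_log hX, inv_div]
      rw [← h']
      exact Real.exp_lt_exp.mpr (by linarith)
    calc W₀ * Real.exp (-k * τ) < W₀ * (Real.sqrt ε / (2 * W₀)) := by
          rw [neg_mul]
          exact mul_lt_mul_of_pos_left hexp hW₀
      _ = Real.sqrt ε / 2 := by field_simp
  have hWτε : Real.sqrt (V τ) < Real.sqrt ε := by
    rw [← hW τ]
    calc W τ ≤ W₀ * Real.exp (-k * τ) + M / k := hWτ
      _ < Real.sqrt ε / 2 + Real.sqrt ε / 4 := by linarith
      _ < Real.sqrt ε := by linarith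
  have hVτ0 : 0 ≤ V τ := (hVpos τ ⟨hτ0.le, hτT⟩).le
  calc V τ = Real.sqrt (V τ) ^ 2 := (Real.sq_sqrt hVτ0).symm
    _ < Real.sqrt ε ^ 2 := by
        exact pow_lt_pow_left₀ hWτε (Real.sqrt_nonneg _) two_ne_zero
    _ = ε := Real.sq_sqrt hε.le
end
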